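/- Let Λ be a regular local ring, x a generator of a height-one prime ideal of Λ, and Ω = Λ/(x). If M is a finitely generated pseudo-null Λ-module, then both M[x] (the x-torsion submodule) and M/xM are torsion Ω-modules. -/

import Mathlib

/-- A commutative Noetherian local ring is *regular* if its maximal ideal can be
generated by `Krull dimension`-many elements. -/
def IsRegularLocal (Λ : Type*) [CommRing Λ] [IsLocalRing Λ] : Prop :=
  IsNoetherianRing Λ ∧
    ∃ s : Finset Λ, Ideal.span (s : Set Λ) = IsLocalRing.maximalIdeal Λ ∧
      ((s.card : ℕ∞) : WithBot ℕ∞) = ringKrullDim Λ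

/-- A module `M` over a commutative ring `Λ` is *pseudo-null* if its localization at every
prime ideal of height `≤ 1` vanishes.  (Height `≤ 1` is expressed by the absence of a chain
`Q' < Q < P` of prime ideals below `P`.) -/
def IsPseudoNull (Λ : Type*) [CommRing Λ] (M : Type*) [AddCommGroup M] [Module Λ M] :
    Prop :=
  ∀ P : Ideal Λ, ∀ hP : P.IsPrime,
    (¬ ∃ Q Q' : Ideal Λ, Q.IsPrime ∧ Q'.IsPrime ∧ Q' < Q ∧ Q < P) →
    haveI := hP
    Subsingleton (LocalizedModule P.primeCompl M)

lemma torsion_of_subsingleton' {Λ : Type*} [CommRing Λ] {S : Submonoid Λ}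
    {M : Type*} [AddCommGroup M] [Module Λ M]
    (h : Subsingleton (LocalizedModule S M)) (m : M) : ∃ a ∈ S, a • m = 0 := by
  have h2 : (LocalizedModule.mk m 1 : LocalizedModule S M) = LocalizedModule.mk 0 1 :=
    Subsingleton.elim _ _
  rw [LocalizedModule.mk_eq] at h2
  obtain ⟨u, hu⟩ := h2
  exact ⟨u, u.2, by simp at hu; exact hu⟩

/-- Let `Λ` be a regular local ring, `x` a generator of a height-one prime
ideal (equivalently a prime element), `Ω = Λ/(x)`.  If `M` is a finitely generated
pseudo-null `Λ`-module, then both the `x`-torsion submodule `M[x]` and the quotient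
`M/xM` are torsion `Ω`-modules (each element is killed by a nonzero element of `Ω`,
i.e. by the class of some `a ∉ (x)`). -/
theorem statement4 (Λ : Type*) [CommRing Λ] [IsLocalRing Λ] [IsDomain Λ]
    (hreg : IsRegularLocal Λ) (x : Λ)
    (hx : Prime x)  -- `x` generates a height-one prime ideal of `Λ`
    (M : Type*) [AddCommGroup M] [Module Λ M] [Module.Finite Λ M]
    (hM : IsPseudoNull Λ M) :
    (∀ m : Submodule.torsionBy Λ M x,
       ∃ a : Λ, a ∉ Ideal.span ({x} : Set Λ) ∧ a • m = 0) ∧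
    (∀ m : M ⧸ (Ideal.span ({x} : Set Λ) • ⊤ : Submodule Λ M),
       ∃ a : Λ, a ∉ Ideal.span ({x} : Set Λ) ∧ a • m = 0) := by
  obtain ⟨hNoeth, -⟩ := hreg
  haveI := hNoeth
  set P := Ideal.span ({x} : Set Λ) with hP
  have hPprime : P.IsPrime := (Ideal.span_singleton_prime hx.ne_zero).mpr hx
  have hht : ¬ ∃ Q Q' : Ideal Λ, Q.IsPrime ∧ Q'.IsPrime ∧ Q' < Q ∧ Q < P := by
    rintro ⟨Q, Q', hQ, hQ', hlt, hltP⟩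
    have hxQ : x ∉ Q := by
      intro hxQ
      exact hltP.ne (le_antisymm hltP.le (by rwa [hP, Ideal.span_singleton_le_iff_mem]))
    have hxm : x ∈ IsLocalRing.maximalIdeal Λ := hx.not_unit
    have hQsub : Q ≤ IsLocalRing.maximalIdeal Λ • Q := by
      intro q hq
      obtain ⟨a, ha⟩ := Ideal.mem_span_singleton'.mp (hltP.le hq)
      have haQ : a ∈ Q := by
        rcases hQ.mem_or_mem (show a * x ∈ Q by rwa [ha]) with h | h
        · exact h
        · exact absurd h hxQ
      have hqx : q = x • a := by rw [smul_eq_mul, mul_comm]; exact ha.symm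
      rw [hqx]
      exact Submodule.smul_mem_smul hxm haQ
    have hQbot : Q = ⊥ :=
      Submodule.eq_bot_of_le_smul_of_le_jacobson_bot (IsLocalRing.maximalIdeal Λ) Q
        (IsNoetherian.noetherian Q) hQsub
        (by rw [IsLocalRing.jacobson_eq_maximalIdeal ⊥ bot_ne_top])
    rw [hQbot] at hlt
    exact (not_lt_bot hlt)
  have hsub : Subsingleton (LocalizedModule P.primeCompl M) := hM P hPprime hht
  constructor
  · rintro ⟨m, hm⟩
    obtain ⟨a, haS, ha⟩ := torsion_of_subsingleton' hsub m
    refine ⟨a, haS, ?_⟩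
    ext
    simpa using ha
  · intro m
    obtain ⟨n, rfl⟩ := Submodule.Quotient.mk_surjective _ m
    obtain ⟨a, haS, ha⟩ := torsion_of_subsingleton' hsub n
    exact ⟨a, haS, by rw [← Submodule.Quotient.mk_smul, ha, Submodule.Quotient.mk_zero]⟩
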